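/- arXiv:1711.06462 — 2 statements merged into one kernel-verified Lean document; each statement's English description precedes it below -/
import Mathlib

section
/- Let M, N be n×n matrices over a field F, both in reduced reverse column echelon form. Then there exist invertible upper triangular matrices G, H with M = G·N·Hᵀ if and only if Piv(M) = Piv(N). -/
open Matrix

namespace SchubertCell

/-- The strict down-set of a subset of a poset. -/
def Down {X : Type*} [Preorder X] (Y : Set X) : Set X := {x | ∃ y ∈ Y, x < y}

variable {F : Type*} [Field F] {n : ℕ}

/-- The pivot-set of a matrix: the maximal elements of the support
under the componentwise (product) order on indices. -/
def Piv (M : Matrix (Fin n) (Fin n) F) : Set (Fin n × Fin n) :=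
  {p | M p.1 p.2 ≠ 0 ∧ ∀ q : Fin n × Fin n, p < q → M q.1 q.2 = 0}

/-- Upper triangular matrix. -/
def UpperTri (G : Matrix (Fin n) (Fin n) F) : Prop := ∀ i j : Fin n, j < i → G i j = 0

/-- `M i j` is the last (largest row index) nonzero entry of column `j`. -/
def IsLast (M : Matrix (Fin n) (Fin n) F) (i j : Fin n) : Prop :=
  M i j ≠ 0 ∧ ∀ i' : Fin n, i < i' → M i' j = 0

/-- Reduced reverse column echelon form: (CE1), (CE2), (CE3). -/
def IsRRCEF (M : Matrix (Fin n) (Fin n) F) : Prop :=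
  (∀ j j' : Fin n, j ≤ j' → (∃ i, M i j' ≠ 0) → ∃ i, M i j ≠ 0) ∧
  (∀ i j i' j' : Fin n, IsLast M i j → IsLast M i' j' → j < j' → i' < i) ∧
  (∀ i j : Fin n, IsLast M i j → M i j = 1 ∧ ∀ j' : Fin n, j' ≠ j → M i j' = 0)

/-- `D(α)`: elements of the strict down-set of `α` whose row contains no element of `α`. -/
def DSet (α : Set (Fin n × Fin n)) : Set (Fin n × Fin n) :=
  {p | p ∈ Down α ∧ ∀ k : Fin n, (p.1, k) ∉ α}

section Aux

variable {F : Type*} [Field F] {n : ℕ}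

lemma exists_isLast {M : Matrix (Fin n) (Fin n) F} {j : Fin n}
    (h : ∃ i, M i j ≠ 0) : ∃ p, IsLast M p j := by
  classical
  obtain ⟨i, hi⟩ := h
  set s : Finset (Fin n) := Finset.univ.filter (fun i => M i j ≠ 0) with hs
  have hsne : s.Nonempty := ⟨i, by simp [hs, hi]⟩
  refine ⟨s.max' hsne, ?_, ?_⟩
  · have := s.max'_mem hsne
    simpa [hs] using this
  · intro i' hi'
    by_contra h0
    have hmem : i' ∈ s := by simp [hs, h0]
    exact absurd (s.le_max' i' hmem) (not_le.mpr hi')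

lemma isLast_row_unique {N : Matrix (Fin n) (Fin n) F} {k k' j : Fin n}
    (h : IsLast N k j) (h' : IsLast N k' j) : k = k' := by
  by_contra hne
  rcases lt_or_gt_of_ne hne with hlt | hlt
  · exact h'.1 (h.2 _ hlt)
  · exact h.1 (h'.2 _ hlt)

lemma isLast_col_unique {N : Matrix (Fin n) (Fin n) F} (hN : IsRRCEF N) {k j j' : Fin n}
    (h : IsLast N k j) (h' : IsLast N k j') : j = j' := by
  by_contra hne
  rcases lt_or_gt_of_ne hne with hlt | hlt
  · exact lt_irrefl k (hN.2.1 k j k j' h h' hlt)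
  · exact lt_irrefl k (hN.2.1 k j' k j h' h hlt)

lemma isLast_apply {N : Matrix (Fin n) (Fin n) F} (hN : IsRRCEF N)
    {k j : Fin n} (h : IsLast N k j) (l : Fin n) :
    N k l = if l = j then 1 else 0 := by
  obtain ⟨h1, h2⟩ := hN.2.2 k j h
  by_cases hl : l = j
  · subst hl; simp [h1]
  · simp [hl, h2 l hl]

lemma isLast_maximal {M : Matrix (Fin n) (Fin n) F} (hM : IsRRCEF M)
    {i j : Fin n} (h : IsLast M i j) :
    ∀ q : Fin n × Fin n, (i, j) < q → M q.1 q.2 = 0 := by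
  rintro ⟨i', j'⟩ hq
  have hle : i ≤ i' ∧ j ≤ j' := Prod.mk_le_mk.mp hq.le
  rcases eq_or_lt_of_le hle.2 with hj | hj
  · have hii : i < i' := by
      rcases eq_or_lt_of_le hle.1 with hi | hi
      · exact absurd (by rw [hi, hj] : ((i:Fin n), j) = (i', j')) (ne_of_lt hq)
      · exact hi
    have := h.2 i' hii
    rwa [hj] at this
  · by_contra h0
    obtain ⟨p, hp⟩ := exists_isLast (M := M) (j := j') ⟨i', h0⟩
    have hip : i' ≤ p := by
      by_contra hc
      exact h0 (hp.2 i' (not_le.mp hc))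
    have : p < i := hM.2.1 i j p j' h hp hj
    exact absurd ((hle.1.trans hip).trans_lt this) (lt_irrefl i)

lemma piv_iff_isLast {M : Matrix (Fin n) (Fin n) F} (hM : IsRRCEF M) (p : Fin n × Fin n) :
    p ∈ Piv M ↔ IsLast M p.1 p.2 := by
  obtain ⟨a, b⟩ := p
  constructor
  · rintro ⟨h1, h2⟩
    refine ⟨h1, fun i' hi' => ?_⟩
    exact h2 (i', b) (Prod.mk_lt_mk.mpr (Or.inl ⟨hi', le_refl b⟩))
  · intro h
    exact ⟨h.1, isLast_maximal hM h⟩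

lemma supp_lemma {M N G H : Matrix (Fin n) (Fin n) F} (hG : UpperTri G) (hH : UpperTri H)
    (hMN : M = G * N * Hᵀ) {i j : Fin n} (h : M i j ≠ 0) :
    ∃ k l : Fin n, i ≤ k ∧ j ≤ l ∧ N k l ≠ 0 := by
  by_contra hc
  push_neg at hc
  apply h
  rw [hMN, Matrix.mul_apply]
  refine Finset.sum_eq_zero fun l _ => ?_
  rcases lt_or_ge l j with hl | hl
  · rw [Matrix.transpose_apply, hH j l hl, mul_zero]
  · rw [Matrix.mul_apply]
    have hz : ∑ k, G i k * N k l = 0 := Finset.sum_eq_zero fun k _ => by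
      rcases lt_or_ge k i with hk | hk
      · rw [hG i k hk, zero_mul]
      · rw [hc k l hk hl, mul_zero]
    rw [hz, zero_mul]

lemma piv_subset {M N G H G' H' : Matrix (Fin n) (Fin n) F}
    (hG : UpperTri G) (hH : UpperTri H) (hG' : UpperTri G') (hH' : UpperTri H')
    (h1 : M = G * N * Hᵀ) (h2 : N = G' * M * H'ᵀ) : Piv M ⊆ Piv N := by
  rintro ⟨i, j⟩ ⟨hij, hmax⟩
  have hmaxN : ∀ q : Fin n × Fin n, (i, j) < q → N q.1 q.2 = 0 := by
    rintro ⟨a, b⟩ hq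
    by_contra h0
    obtain ⟨k, l, hak, hbl, hkl⟩ := supp_lemma hG' hH' h2 h0
    have : ((i : Fin n), j) < (k, l) :=
      lt_of_lt_of_le hq (Prod.mk_le_mk.mpr ⟨hak, hbl⟩)
    exact hkl (hmax (k, l) this)
  obtain ⟨k, l, hik, hjl, hkl⟩ := supp_lemma hG hH h1 hij
  have heq : ((k : Fin n), l) = (i, j) := by
    by_contra hne
    have : ((i : Fin n), j) < (k, l) :=
      lt_of_le_of_ne (Prod.mk_le_mk.mpr ⟨hik, hjl⟩) (Ne.symm hne)
    exact hkl (hmaxN (k, l) this)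
  refine ⟨?_, hmaxN⟩
  have := heq
  rw [Prod.mk.injEq] at this
  rw [← this.1, ← this.2]
  exact hkl

end Aux

theorem equiv_iff_pivot_eq {F : Type*} [Field F] {n : ℕ}
    (M N : Matrix (Fin n) (Fin n) F) (hM : IsRRCEF M) (hN : IsRRCEF N) :
    (∃ G H : Matrix (Fin n) (Fin n) F, IsUnit G ∧ IsUnit H ∧
      UpperTri G ∧ UpperTri H ∧ M = G * N * Hᵀ) ↔ Piv M = Piv N := by
  constructor
  · rintro ⟨G, H, hGu, hHu, hGt, hHt, hMN⟩
    have hGdet : IsUnit G.det := (Matrix.isUnit_iff_isUnit_det G).mp hGu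
    have hHdet : IsUnit H.det := (Matrix.isUnit_iff_isUnit_det H).mp hHu
    have hHtdet : IsUnit Hᵀ.det := by rwa [Matrix.det_transpose]
    haveI := G.invertibleOfIsUnitDet hGdet
    haveI := H.invertibleOfIsUnitDet hHdet
    have hGinv : UpperTri G⁻¹ := by
      have : Matrix.BlockTriangular G id := fun i j h => hGt i j h
      exact fun i j h => Matrix.blockTriangular_inv_of_blockTriangular this h
    have hHinv : UpperTri H⁻¹ := by
      have : Matrix.BlockTriangular H id := fun i j h => hHt i j h
      exact fun i j h => Matrix.blockTriangular_inv_of_blockTriangular this h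
    have hNM : N = G⁻¹ * M * (H⁻¹)ᵀ := by
      rw [hMN, Matrix.transpose_nonsing_inv, Matrix.mul_assoc G N Hᵀ,
        Matrix.nonsing_inv_mul_cancel_left _ _ hGdet,
        Matrix.mul_nonsing_inv_cancel_right _ _ hHtdet]
    apply Set.Subset.antisymm
    · exact piv_subset hGt hHt hGinv hHinv hMN hNM
    · exact piv_subset hGinv hHinv hGt hHt hNM hMN
  · intro hPiv
    classical
    have htrans : ∀ p l : Fin n, IsLast M p l ↔ IsLast N p l := fun p l => by
      rw [← piv_iff_isLast hM (p, l), ← piv_iff_isLast hN (p, l), hPiv]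
    set G : Matrix (Fin n) (Fin n) F := Matrix.of fun i k =>
      (if i = k then (1 : F) else 0) +
        ∑ j : Fin n, if i < k ∧ IsLast N k j then M i j - N i j else 0 with hGdef
    have hGapp : ∀ i k, G i k = (if i = k then (1 : F) else 0) +
        ∑ j : Fin n, if i < k ∧ IsLast N k j then M i j - N i j else 0 := fun i k => rfl
    have hGt : UpperTri G := by
      intro i k hk
      rw [hGapp]
      have h1 : (if i = k then (1 : F) else 0) = 0 := by
        simp [hk.ne']
      have h2 : (∑ j : Fin n, if i < k ∧ IsLast N k j then M i j - N i j else 0) = 0 :=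
        Finset.sum_eq_zero fun j _ => by
          have : ¬ (i < k ∧ IsLast N k j) := fun hc => absurd hc.1 (not_lt.mpr hk.le)
          simp [this]
      rw [h1, h2, add_zero]
    have hGdiag : ∀ i, G i i = 1 := by
      intro i
      rw [hGapp]
      have h2 : (∑ j : Fin n, if i < i ∧ IsLast N i j then M i j - N i j else 0) = 0 :=
        Finset.sum_eq_zero fun j _ => by simp
      simp [h2]
    have hGu : IsUnit G := by
      rw [Matrix.isUnit_iff_isUnit_det]
      have hbt : Matrix.BlockTriangular G id := fun i j h => hGt i j h
      rw [Matrix.det_of_upperTriangular hbt]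
      simp [hGdiag]
    refine ⟨G, 1, hGu, isUnit_one, hGt, fun i j h => Matrix.one_apply_ne h.ne', ?_⟩
    rw [Matrix.transpose_one, Matrix.mul_one]
    ext i l
    rw [Matrix.mul_apply]
    have expand : ∀ k : Fin n, G i k * N k l =
        (if i = k then N k l else 0) +
          (if i < k ∧ IsLast N k l then M i l - N i l else 0) := by
      intro k
      rw [hGapp, add_mul]
      congr 1
      · by_cases h : i = k <;> simp [h]
      · -- (∑ j, ...) * N k l = if i < k ∧ IsLast N k l then M i l - N i l else 0
        by_cases hk : ∃ j, i < k ∧ IsLast N k j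
        · obtain ⟨j0, hik, hj0⟩ := hk
          have hsum : (∑ j : Fin n, if i < k ∧ IsLast N k j then M i j - N i j else 0)
              = M i j0 - N i j0 := by
            rw [Finset.sum_eq_single j0]
            · simp [hik, hj0]
            · intro j _ hne
              by_cases h : IsLast N k j
              · exact absurd (isLast_col_unique hN h hj0) hne
              · simp [h]
            · intro h; exact absurd (Finset.mem_univ j0) h
          rw [hsum, isLast_apply hN hj0 l]
          by_cases hl : l = j0
          · subst hl; simp [hik, hj0]
          · have hnl : ¬ IsLast N k l := fun h => hl (isLast_col_unique hN h hj0)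
            simp [hl, hnl]
        · push_neg at hk
          have h1 : (∑ j : Fin n, if i < k ∧ IsLast N k j then M i j - N i j else 0) = 0 :=
            Finset.sum_eq_zero fun j _ => if_neg (fun hc => hk j hc.1 hc.2)
          rw [h1, zero_mul, if_neg (fun hc => hk l hc.1 hc.2)]
    rw [Finset.sum_congr rfl fun k _ => expand k, Finset.sum_add_distrib]
    have hfirst : (∑ k : Fin n, if i = k then N k l else 0) = N i l := by
      rw [Finset.sum_ite_eq]; simp
    rw [hfirst]
    by_cases hex : ∃ k0 : Fin n, i < k0 ∧ IsLast N k0 l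
    · obtain ⟨k0, hik0, hk0⟩ := hex
      have hsum : (∑ k : Fin n, if i < k ∧ IsLast N k l then M i l - N i l else 0)
          = M i l - N i l := by
        rw [Finset.sum_eq_single k0]
        · simp [hik0, hk0]
        · intro k _ hne
          by_cases h : IsLast N k l
          · exact absurd (isLast_row_unique h hk0) hne
          · simp [h]
        · intro h; exact absurd (Finset.mem_univ k0) h
      rw [hsum]; ring
    · push_neg at hex
      have hsum : (∑ k : Fin n, if i < k ∧ IsLast N k l then M i l - N i l else 0) = 0 :=
        Finset.sum_eq_zero fun k _ => if_neg (fun hc => hex k hc.1 hc.2)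
      rw [hsum, add_zero]
      by_cases hcol : ∃ k, IsLast N k l
      · obtain ⟨k, hk⟩ := hcol
        have hki : k ≤ i := not_lt.mp (fun h => (hex k h) hk)
        have hMk : IsLast M k l := (htrans k l).mpr hk
        rcases eq_or_lt_of_le hki with heq | hlt
        · subst heq
          rw [(hM.2.2 k l hMk).1, (hN.2.2 k l hk).1]
        · rw [hMk.2 i hlt, hk.2 i hlt]
      · push_neg at hcol
        have hNz : N i l = 0 := by
          by_contra h0
          obtain ⟨p, hp⟩ := exists_isLast ⟨i, h0⟩
          exact hcol p hp
        have hMz : M i l = 0 := by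
          by_contra h0
          obtain ⟨p, hp⟩ := exists_isLast ⟨i, h0⟩
          exact hcol p ((htrans p l).mp hp)
        rw [hNz, hMz]

end SchubertCell
end

section
/- Let α be an antichain of size m in [n]×[m], 1 ≤ m ≤ n−1, and let M, N, M′, N′ be reduced reverse column echelon matrices with pivot-set α. Suppose there exist invertible upper triangular matrices G, H, K with M′ = G·M·Hᵀ and N′ = G·N·Kᵀ. Then Piv(M−N) = Piv(M′−N′). -/
open Matrix

namespace SchubertCell

variable {F : Type*} [Field F] {n : ℕ}

section Lemmas

open Finset

section Aux

variable {M : Matrix (Fin n) (Fin n) F} {α : Set (Fin n × Fin n)}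

lemma exists_isLast_s12 {b : Fin n} (h : ∃ a, M a b ≠ 0) : ∃ r, IsLast M r b := by
  classical
  obtain ⟨a, ha⟩ := h
  obtain ⟨r, hr, hmax⟩ := (Finset.univ.filter (fun x => M x b ≠ 0)).exists_max_image id
    ⟨a, by simp [ha]⟩
  refine ⟨r, (Finset.mem_filter.mp hr).2, fun i' hi' => ?_⟩
  by_contra h0
  exact absurd (hmax i' (Finset.mem_filter.mpr ⟨Finset.mem_univ _, h0⟩)) (not_le.mpr hi')

lemma isLast_mem_piv (hM : IsRRCEF M) {r b : Fin n} (h : IsLast M r b) : (r, b) ∈ Piv M := by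
  refine ⟨h.1, ?_⟩
  rintro ⟨a, c⟩ hlt
  by_contra hne
  have hle : r ≤ a ∧ b ≤ c := Prod.le_def.mp hlt.le
  rcases eq_or_lt_of_le hle.2 with hbc | hbc
  · rcases eq_or_lt_of_le hle.1 with hra | hra
    · exact hlt.ne (by rw [hra, hbc])
    · exact hne (hbc ▸ h.2 a hra)
  · obtain ⟨r', hr'⟩ := exists_isLast_s12 ⟨a, hne⟩
    have : r' < r := hM.2.1 r b r' c h hr' hbc
    exact hne (hr'.2 a (lt_of_lt_of_le this hle.1))

lemma piv_isLast {r b : Fin n} (h : (r, b) ∈ Piv M) : IsLast M r b := by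
  refine ⟨h.1, fun a ha => h.2 (a, b) ?_⟩
  exact Prod.mk_lt_mk.mpr (Or.inl ⟨ha, le_rfl⟩)

lemma col_le (hM : IsRRCEF M) (hMα : Piv M = α) {a b : Fin n} (h : M a b ≠ 0) :
    ∃ r, (r, b) ∈ α ∧ a ≤ r := by
  obtain ⟨r, hr⟩ := exists_isLast_s12 ⟨a, h⟩
  refine ⟨r, hMα ▸ isLast_mem_piv hM hr, ?_⟩
  by_contra h0
  exact h (hr.2 a (not_le.mp h0))

lemma piv_row (hM : IsRRCEF M) (hMα : Piv M = α) {r b : Fin n} (h : (r, b) ∈ α) :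
    M r b = 1 ∧ ∀ c : Fin n, c ≠ b → M r c = 0 :=
  hM.2.2 r b (piv_isLast (hMα ▸ h))

lemma piv_unique (hMα : Piv M = α) {r r' b : Fin n} (h : (r, b) ∈ α) (h' : (r', b) ∈ α) :
    r = r' := by
  have h1 : (r, b) ∈ Piv M := hMα ▸ h
  have h2 : (r', b) ∈ Piv M := hMα ▸ h'
  by_contra hne
  rcases lt_or_gt_of_ne hne with hlt | hlt
  · exact h2.1 (h1.2 (r', b) (Prod.mk_lt_mk.mpr (Or.inl ⟨hlt, le_rfl⟩)))
  · exact h1.1 (h2.2 (r, b) (Prod.mk_lt_mk.mpr (Or.inl ⟨hlt, le_rfl⟩)))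

lemma piv_antitone (hM : IsRRCEF M) (hMα : Piv M = α) {r b r' b' : Fin n}
    (h : (r, b) ∈ α) (h' : (r', b') ∈ α) (hbb : b < b') : r' < r :=
  hM.2.1 r b r' b' (piv_isLast (hMα ▸ h)) (piv_isLast (hMα ▸ h')) hbb

lemma not_pivcol_zero (hM : IsRRCEF M) (hMα : Piv M = α) {b : Fin n}
    (h : ∀ r, (r, b) ∉ α) (a : Fin n) : M a b = 0 := by
  by_contra h0
  obtain ⟨r, hr, -⟩ := col_le hM hMα h0
  exact h r hr

lemma diff_support {N : Matrix (Fin n) (Fin n) F} (hM : IsRRCEF M) (hN : IsRRCEF N)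
    (hMα : Piv M = α) (hNα : Piv N = α) {a b : Fin n} (h : M a b - N a b ≠ 0) :
    (∀ k, (a, k) ∉ α) ∧ ∃ r, (r, b) ∈ α ∧ a < r := by
  constructor
  · intro k hk
    apply h
    rcases eq_or_ne b k with rfl | hbk
    · rw [(piv_row hM hMα hk).1, (piv_row hN hNα hk).1, sub_self]
    · rw [(piv_row hM hMα hk).2 b hbk, (piv_row hN hNα hk).2 b hbk, sub_self]
  · have hone : M a b ≠ 0 ∨ N a b ≠ 0 := by
      by_contra h0
      push_neg at h0
      exact h (by rw [h0.1, h0.2, sub_self])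
    have key : ∀ (P : Matrix (Fin n) (Fin n) F), IsRRCEF P → Piv P = α → P a b ≠ 0 →
        ∃ r, (r, b) ∈ α ∧ a < r := by
      intro P hP hPα hPab
      obtain ⟨r, hr, hle⟩ := col_le hP hPα hPab
      refine ⟨r, hr, lt_of_le_of_ne hle ?_⟩
      rintro rfl
      apply h
      rw [(piv_row hM hMα hr).1, (piv_row hN hNα hr).1, sub_self]
    rcases hone with h1 | h1
    · exact key M hM hMα h1
    · exact key N hN hNα h1

end Aux

lemma UpperTri.blockTri {G : Matrix (Fin n) (Fin n) F} (hGt : UpperTri G) :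
    BlockTriangular G id := fun i j hij => hGt i j hij

lemma upperTri_diag_ne_zero {G : Matrix (Fin n) (Fin n) F} (hG : IsUnit G) (hGt : UpperTri G)
    (i : Fin n) : G i i ≠ 0 := by
  have hdet : IsUnit G.det := (Matrix.isUnit_iff_isUnit_det G).mp hG
  rw [Matrix.det_of_upperTriangular hGt.blockTri] at hdet
  have := hdet.ne_zero
  rw [Finset.prod_ne_zero_iff] at this
  exact this i (Finset.mem_univ i)

lemma upperTri_inv {G : Matrix (Fin n) (Fin n) F} (hG : IsUnit G) (hGt : UpperTri G) :
    UpperTri G⁻¹ := by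
  haveI : Invertible G := G.invertibleOfIsUnitDet ((Matrix.isUnit_iff_isUnit_det G).mp hG)
  exact fun i j hij => Matrix.blockTriangular_inv_of_blockTriangular hGt.blockTri hij

lemma upperTri_mul {G H : Matrix (Fin n) (Fin n) F} (hGt : UpperTri G) (hHt : UpperTri H) :
    UpperTri (G * H) := by
  intro i j hij
  rw [Matrix.mul_apply]
  apply Finset.sum_eq_zero
  intro y _
  rcases lt_or_ge y i with hy | hy
  · rw [hGt i y hy, zero_mul]
  · rw [hHt y j (lt_of_lt_of_le hij hy), mul_zero]

lemma upperTri_inv_diag {G : Matrix (Fin n) (Fin n) F} (hG : IsUnit G) (hGt : UpperTri G)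
    (b : Fin n) : G⁻¹ b b = (G b b)⁻¹ := by
  have hdet : IsUnit G.det := (Matrix.isUnit_iff_isUnit_det G).mp hG
  have h1 : (G * G⁻¹) b b = 1 := by rw [Matrix.mul_nonsing_inv G hdet, Matrix.one_apply_eq]
  rw [Matrix.mul_apply, Finset.sum_eq_single b] at h1
  · exact (inv_eq_of_mul_eq_one_right h1).symm
  · intro y _ hy
    rcases lt_or_gt_of_ne hy with hlt | hlt
    · rw [hGt b y hlt, zero_mul]
    · rw [upperTri_inv hG hGt y b hlt, mul_zero]
  · exact fun h => absurd (Finset.mem_univ b) h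

lemma triple_apply (G M H : Matrix (Fin n) (Fin n) F) (a b : Fin n) :
    (G * M * Hᵀ) a b = ∑ x, ∑ y, G a x * M x y * H b y := by
  rw [Matrix.mul_apply]
  simp_rw [Matrix.mul_apply, Matrix.transpose_apply, Finset.sum_mul]
  rw [Finset.sum_comm]


lemma pivot_norm {α : Set (Fin n × Fin n)} {M M' G H : Matrix (Fin n) (Fin n) F}
    (hM : IsRRCEF M) (hM' : IsRRCEF M') (hMα : Piv M = α) (hM'α : Piv M' = α)
    (hGt : UpperTri G) (hHt : UpperTri H)
    (h1 : M' = G * M * Hᵀ) {r b : Fin n} (hrb : (r, b) ∈ α) : G r r * H b b = 1 := by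
  have hm' : M' r b = 1 := (piv_row hM' hM'α hrb).1
  rw [h1, triple_apply] at hm'
  have hz1 : ∀ x ∈ (univ : Finset (Fin n)), x ≠ r →
      ∑ y, G r x * M x y * H b y = 0 := by
    intro x _ hxr
    apply Finset.sum_eq_zero
    intro y _
    rcases lt_or_gt_of_ne hxr with hlt | hlt
    · rw [hGt r x hlt, zero_mul, zero_mul]
    · rcases lt_or_ge y b with hyb | hyb
      · rw [hHt b y hyb, mul_zero]
      · have hMxy : M x y = 0 := by
          by_contra h0
          obtain ⟨r', hr', hxr'⟩ := col_le hM hMα h0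
          rcases eq_or_lt_of_le hyb with heq | hby
          · rw [← heq] at hr'
            rw [← piv_unique hMα hrb hr'] at hxr'
            exact absurd hxr' (not_le.mpr hlt)
          · exact absurd hxr' (not_le.mpr (lt_trans (piv_antitone hM hMα hrb hr' hby) hlt))
        rw [hMxy, mul_zero, zero_mul]
  rw [Finset.sum_eq_single r hz1 (fun h => absurd (Finset.mem_univ r) h)] at hm'
  have hz2 : ∀ y ∈ (univ : Finset (Fin n)), y ≠ b → G r r * M r y * H b y = 0 := by
    intro y _ hyb
    rcases lt_or_gt_of_ne hyb with hlt | hlt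
    · rw [hHt b y hlt, mul_zero]
    · rw [(piv_row hM hMα hrb).2 y (ne_of_gt hlt), mul_zero, zero_mul]
  rw [Finset.sum_eq_single b hz2 (fun h => absurd (Finset.mem_univ b) h),
    (piv_row hM hMα hrb).1, mul_one] at hm'
  exact hm'

lemma inc {α : Set (Fin n × Fin n)} {M N M' N' G H K : Matrix (Fin n) (Fin n) F}
    (hM : IsRRCEF M) (hN : IsRRCEF N) (hM' : IsRRCEF M') (hN' : IsRRCEF N')
    (hMα : Piv M = α) (hNα : Piv N = α) (hM'α : Piv M' = α) (hN'α : Piv N' = α)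
    (hG : IsUnit G) (hH : IsUnit H) (hK : IsUnit K)
    (hGt : UpperTri G) (hHt : UpperTri H) (hKt : UpperTri K)
    (h1 : M' = G * M * Hᵀ) (h2 : N' = G * N * Kᵀ) :
    Piv (M - N) ⊆ Piv (M' - N') := by
  rintro ⟨i, j⟩ ⟨hp1, hp2⟩
  have hDp : M i j - N i j ≠ 0 := by simpa using hp1
  have hDmax : ∀ x y : Fin n, (i, j) < (x, y) → M x y - N x y = 0 := by
    intro x y h
    simpa using hp2 (x, y) h
  obtain ⟨hirow, rj, hrj, hirj⟩ := diff_support hM hN hMα hNα hDp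
  have hdetH : IsUnit H.det := (Matrix.isUnit_iff_isUnit_det H).mp hH
  set U := K * H⁻¹ with hU
  have hUt : UpperTri U := upperTri_mul hKt (upperTri_inv hH hHt)
  have hHH : Hᵀ * (H⁻¹)ᵀ = 1 := by
    rw [← Matrix.transpose_mul, Matrix.nonsing_inv_mul H hdetH, Matrix.transpose_one]
  have hXU : G * N * Hᵀ * Uᵀ = N' := by
    rw [hU, Matrix.transpose_mul, h2, ← Matrix.mul_assoc,
      Matrix.mul_assoc (G * N) Hᵀ (H⁻¹)ᵀ, hHH, Matrix.mul_one]
  have hN'app : ∀ a b : Fin n, N' a b = ∑ b', (G * N * Hᵀ) a b' * U b b' := by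
    intro a b
    rw [← hXU, Matrix.mul_apply]
    simp only [Matrix.transpose_apply]
  have hXW : G * N * Hᵀ = M' - G * (M - N) * Hᵀ := by
    rw [h1, Matrix.mul_sub, Matrix.sub_mul, sub_sub_cancel]
  have hWapp : ∀ a b : Fin n,
      (G * (M - N) * Hᵀ) a b = ∑ x, ∑ y, G a x * (M x y - N x y) * H b y := by
    intro a b
    rw [triple_apply]
    simp only [Matrix.sub_apply]
  have hW0 : ∀ a b : Fin n, i ≤ a → j ≤ b → (a, b) ≠ (i, j) →
      (G * (M - N) * Hᵀ) a b = 0 := by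
    intro a b hia hjb hne
    rw [hWapp]
    apply Finset.sum_eq_zero
    intro x _
    apply Finset.sum_eq_zero
    intro y _
    rcases lt_or_ge x a with h | hxa
    · rw [hGt a x h, zero_mul, zero_mul]
    rcases lt_or_ge y b with h | hyb
    · rw [hHt b y h, mul_zero]
    have hxy : (i, j) < (x, y) := by
      refine lt_of_le_of_ne (Prod.mk_le_mk.mpr ⟨le_trans hia hxa, le_trans hjb hyb⟩) ?_
      intro heq
      have h'1 : i = x := congrArg Prod.fst heq
      have h'2 : j = y := congrArg Prod.snd heq
      rw [← h'1] at hxa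
      rw [← h'2] at hyb
      exact hne (by rw [le_antisymm hxa hia, le_antisymm hyb hjb])
    rw [hDmax x y hxy, mul_zero, zero_mul]
  have hWp : (G * (M - N) * Hᵀ) i j = G i i * (M i j - N i j) * H j j := by
    rw [hWapp]
    have hz1 : ∀ x ∈ (univ : Finset (Fin n)), x ≠ i →
        ∑ y, G i x * (M x y - N x y) * H j y = 0 := by
      intro x _ hxi
      apply Finset.sum_eq_zero
      intro y _
      rcases lt_or_gt_of_ne hxi with hlt | hlt
      · rw [hGt i x hlt, zero_mul, zero_mul]
      · rcases lt_or_ge y j with hyj | hyj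
        · rw [hHt j y hyj, mul_zero]
        · rw [hDmax x y (Prod.mk_lt_mk.mpr (Or.inl ⟨hlt, hyj⟩)), mul_zero, zero_mul]
    rw [Finset.sum_eq_single i hz1 (fun h => absurd (Finset.mem_univ i) h)]
    have hz2 : ∀ y ∈ (univ : Finset (Fin n)), y ≠ j →
        G i i * (M i y - N i y) * H j y = 0 := by
      intro y _ hyj
      rcases lt_or_gt_of_ne hyj with hlt | hlt
      · rw [hHt j y hlt, mul_zero]
      · rw [hDmax i y (Prod.mk_lt_mk.mpr (Or.inr ⟨le_rfl, hlt⟩)), mul_zero, zero_mul]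
    rw [Finset.sum_eq_single j hz2 (fun h => absurd (Finset.mem_univ j) h)]
  have hHdiag : ∀ b r : Fin n, (r, b) ∈ α → G r r * H b b = 1 :=
    fun b r h => pivot_norm hM hM' hMα hM'α hGt hHt h1 h
  have hKdiag : ∀ b r : Fin n, (r, b) ∈ α → G r r * K b b = 1 :=
    fun b r h => pivot_norm hN hN' hNα hN'α hGt hKt h2 h
  have hUdiag : ∀ b r : Fin n, (r, b) ∈ α → U b b = 1 := by
    intro b r hrb
    have hg : G r r ≠ 0 := left_ne_zero_of_mul_eq_one (hHdiag b r hrb)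
    have hHK : H b b = K b b :=
      mul_left_cancel₀ hg ((hHdiag b r hrb).trans (hKdiag b r hrb).symm)
    have hHbb : H b b ≠ 0 := right_ne_zero_of_mul_eq_one (hHdiag b r hrb)
    have hz : ∀ y ∈ (univ : Finset (Fin n)), y ≠ b → K b y * H⁻¹ y b = 0 := by
      intro y _ hy
      rcases lt_or_gt_of_ne hy with hlt | hlt
      · rw [hKt b y hlt, zero_mul]
      · rw [upperTri_inv hH hHt y b hlt, mul_zero]
    rw [hU, Matrix.mul_apply, Finset.sum_eq_single b hz (fun h => absurd (Finset.mem_univ b) h),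
      upperTri_inv_diag hH hHt, ← hHK, mul_inv_cancel₀ hHbb]
  have hUsupp : ∀ b c r' : Fin n, b < c → (r', c) ∈ α → U b c ≠ 0 →
      ∃ x y : Fin n, (M x y - N x y ≠ 0) ∧ r' ≤ x ∧ b ≤ y := by
    intro b c r' hbc hr'c hUbc
    have hNrb : N' r' b = 0 := (piv_row hN' hN'α hr'c).2 b (ne_of_lt hbc)
    have hMsum : ∑ b', M' r' b' * U b b' = U b c := by
      have hz : ∀ y ∈ (univ : Finset (Fin n)), y ≠ c → M' r' y * U b y = 0 := by
        intro y _ hy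
        rw [(piv_row hM' hM'α hr'c).2 y hy, zero_mul]
      rw [Finset.sum_eq_single c hz (fun h => absurd (Finset.mem_univ c) h),
        (piv_row hM' hM'α hr'c).1, one_mul]
    have hWsum : ∑ b', (G * (M - N) * Hᵀ) r' b' * U b b' ≠ 0 := by
      intro h0
      apply hUbc
      rw [← hMsum]
      have : ∀ b' : Fin n, M' r' b' * U b b' =
          (G * N * Hᵀ) r' b' * U b b' + (G * (M - N) * Hᵀ) r' b' * U b b' := by
        intro b'
        rw [hXW, Matrix.sub_apply]
        ring
      calc ∑ b', M' r' b' * U b b'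
          = ∑ b', ((G * N * Hᵀ) r' b' * U b b' + (G * (M - N) * Hᵀ) r' b' * U b b') := by
            exact Finset.sum_congr rfl (fun b' _ => this b')
        _ = (∑ b', (G * N * Hᵀ) r' b' * U b b') + ∑ b', (G * (M - N) * Hᵀ) r' b' * U b b' :=
            Finset.sum_add_distrib
        _ = 0 := by rw [← hN'app r' b, hNrb, h0, add_zero]
    obtain ⟨b', _, hb'⟩ := Finset.exists_ne_zero_of_sum_ne_zero hWsum
    have hWne : (G * (M - N) * Hᵀ) r' b' ≠ 0 := left_ne_zero_of_mul hb'
    have hUne : U b b' ≠ 0 := right_ne_zero_of_mul hb'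
    have hbb' : b ≤ b' := not_lt.mp (fun h => hUne (hUt b b' h))
    rw [hWapp] at hWne
    obtain ⟨x, _, hx⟩ := Finset.exists_ne_zero_of_sum_ne_zero hWne
    obtain ⟨y, _, hy⟩ := Finset.exists_ne_zero_of_sum_ne_zero hx
    have hDxy : M x y - N x y ≠ 0 := fun h0 => hy (by rw [h0, mul_zero, zero_mul])
    have hr'x : r' ≤ x := not_lt.mp (fun h => hy (by rw [hGt r' x h, zero_mul, zero_mul]))
    have hb'y : b' ≤ y := not_lt.mp (fun h => hy (by rw [hHt b' y h, mul_zero]))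
    exact ⟨x, y, hDxy, hr'x, le_trans hbb' hb'y⟩
  have hmaster : ∀ a b : Fin n, i ≤ a → j ≤ b → N' a b = U b b * ((G * N * Hᵀ) a b) := by
    intro a b hia hjb
    rw [hN'app]
    have hz : ∀ b' ∈ (univ : Finset (Fin n)), b' ≠ b → (G * N * Hᵀ) a b' * U b b' = 0 := by
      intro b' _ hb'
      rcases lt_or_gt_of_ne hb' with h | h
      · rw [hUt b b' h, mul_zero]
      · have hXval : (G * N * Hᵀ) a b' = M' a b' := by
          rw [hXW, Matrix.sub_apply,
            hW0 a b' hia (le_trans hjb h.le) (fun he => absurd (congrArg Prod.snd he)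
              (ne_of_gt (lt_of_le_of_lt hjb h))), sub_zero]
        rw [hXval]
        by_contra h0
        have hM'ne : M' a b' ≠ 0 := left_ne_zero_of_mul h0
        have hUne : U b b' ≠ 0 := right_ne_zero_of_mul h0
        obtain ⟨r', hr', har'⟩ := col_le hM' hM'α hM'ne
        obtain ⟨x, y, hDxy, hr'x, hby⟩ := hUsupp b b' r' h hr' hUne
        have hix : i ≤ x := le_trans hia (le_trans har' hr'x)
        have hjy : j ≤ y := le_trans hjb hby
        have hxyp : (x, y) = (i, j) := by
          by_contra hne
          exact hDxy (hDmax x y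
            (lt_of_le_of_ne (Prod.mk_le_mk.mpr ⟨hix, hjy⟩) (Ne.symm hne)))
        have hxi : x = i := congrArg Prod.fst hxyp
        rw [hxi] at hr'x
        have hr'i : r' = i := le_antisymm hr'x (le_trans hia har')
        rw [hr'i] at hr'
        exact hirow b' hr'
    rw [Finset.sum_eq_single b hz (fun h => absurd (Finset.mem_univ b) h), mul_comm]
  have hHjj : H j j ≠ 0 := right_ne_zero_of_mul_eq_one (hHdiag j rj hrj)
  constructor
  · show (M' - N') i j ≠ 0
    rw [Matrix.sub_apply, hmaster i j le_rfl le_rfl, hUdiag j rj hrj, one_mul, hXW,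
      Matrix.sub_apply, hWp]
    have : M' i j - (M' i j - G i i * (M i j - N i j) * H j j)
        = G i i * (M i j - N i j) * H j j := by ring
    rw [this]
    exact mul_ne_zero (mul_ne_zero (upperTri_diag_ne_zero hG hGt i) hDp) hHjj
  · rintro ⟨a, b⟩ hq
    have hab : i ≤ a ∧ j ≤ b := Prod.mk_le_mk.mp hq.le
    have hne : (a, b) ≠ (i, j) := hq.ne'
    show (M' - N') a b = 0
    by_cases hpc : ∃ r, (r, b) ∈ α
    · obtain ⟨r, hr⟩ := hpc
      rw [Matrix.sub_apply, hmaster a b hab.1 hab.2, hUdiag b r hr, one_mul, hXW,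
        Matrix.sub_apply, hW0 a b hab.1 hab.2 hne, sub_zero, sub_self]
    · push_neg at hpc
      rw [Matrix.sub_apply, not_pivcol_zero hM' hM'α hpc a, not_pivcol_zero hN' hN'α hpc a,
        sub_self]

end Lemmas

theorem pivot_diff_invariant {F : Type*} [Field F] {n m : ℕ}
    (hm1 : 1 ≤ m) (hm2 : m ≤ n - 1)
    (α : Set (Fin n × Fin n)) (hanti : IsAntichain (· ≤ ·) α)
    (hcol : ∀ p ∈ α, (p.2 : ℕ) < m) (hcard : α.ncard = m)
    (M N M' N' : Matrix (Fin n) (Fin n) F)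
    (hM : IsRRCEF M) (hN : IsRRCEF N) (hM' : IsRRCEF M') (hN' : IsRRCEF N')
    (hMα : Piv M = α) (hNα : Piv N = α) (hM'α : Piv M' = α) (hN'α : Piv N' = α)
    (G H K : Matrix (Fin n) (Fin n) F)
    (hG : IsUnit G) (hH : IsUnit H) (hK : IsUnit K)
    (hGt : UpperTri G) (hHt : UpperTri H) (hKt : UpperTri K)
    (h1 : M' = G * M * Hᵀ) (h2 : N' = G * N * Kᵀ) :
    Piv (M - N) = Piv (M' - N') := by
  have hdetG : IsUnit G.det := (Matrix.isUnit_iff_isUnit_det G).mp hG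
  have hdetH : IsUnit H.det := (Matrix.isUnit_iff_isUnit_det H).mp hH
  have hdetK : IsUnit K.det := (Matrix.isUnit_iff_isUnit_det K).mp hK
  have hdetHT : IsUnit Hᵀ.det := by rwa [Matrix.det_transpose]
  have hdetKT : IsUnit Kᵀ.det := by rwa [Matrix.det_transpose]
  have hG' : IsUnit G⁻¹ := Matrix.isUnit_nonsing_inv_iff.mpr hG
  have hH' : IsUnit H⁻¹ := Matrix.isUnit_nonsing_inv_iff.mpr hH
  have hK' : IsUnit K⁻¹ := Matrix.isUnit_nonsing_inv_iff.mpr hK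
  have h1' : M = G⁻¹ * M' * (H⁻¹)ᵀ := by
    rw [h1, Matrix.transpose_nonsing_inv, Matrix.mul_assoc G M Hᵀ, ← Matrix.mul_assoc G⁻¹ G (M * Hᵀ),
      Matrix.nonsing_inv_mul G hdetG, Matrix.one_mul, Matrix.mul_assoc M Hᵀ Hᵀ⁻¹,
      Matrix.mul_nonsing_inv Hᵀ hdetHT, Matrix.mul_one]
  have h2' : N = G⁻¹ * N' * (K⁻¹)ᵀ := by
    rw [h2, Matrix.transpose_nonsing_inv, Matrix.mul_assoc G N Kᵀ, ← Matrix.mul_assoc G⁻¹ G (N * Kᵀ),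
      Matrix.nonsing_inv_mul G hdetG, Matrix.one_mul, Matrix.mul_assoc N Kᵀ Kᵀ⁻¹,
      Matrix.mul_nonsing_inv Kᵀ hdetKT, Matrix.mul_one]
  apply Set.Subset.antisymm
  · exact inc hM hN hM' hN' hMα hNα hM'α hN'α hG hH hK hGt hHt hKt h1 h2
  · exact inc hM' hN' hM hN hM'α hN'α hMα hNα hG' hH' hK'
      (upperTri_inv hG hGt) (upperTri_inv hH hHt) (upperTri_inv hK hKt) h1' h2'

end SchubertCell
end
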